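/- Let A and B be real d×d matrices. Suppose A is symmetric, invertible, with exactly one negative eigenvalue, and AB is skew-symmetric. Then A + B is invertible and has exactly one negative real eigenvalue, whose geometric multiplicity is 1. -/

import Mathlib

open Matrix

section AuxStmt2

lemma aux_transpose {d : ℕ} {A : Matrix (Fin d) (Fin d) ℝ} (hA : A.IsHermitian) : Aᵀ = A := by
  rw [← conjTranspose_eq_transpose_of_trivial]; exact hA

lemma aux_symm {d : ℕ} {A : Matrix (Fin d) (Fin d) ℝ} (hA : A.IsHermitian)
    (x y : Fin d → ℝ) : y ⬝ᵥ A *ᵥ x = x ⬝ᵥ A *ᵥ y := by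
  rw [dotProduct_mulVec, ← mulVec_transpose, aux_transpose hA, dotProduct_comm]

lemma aux_sq {d : ℕ} {A : Matrix (Fin d) (Fin d) ℝ} (hA : A.IsHermitian)
    (x y : Fin d → ℝ) : y ⬝ᵥ (A * A) *ᵥ x = (A *ᵥ y) ⬝ᵥ (A *ᵥ x) := by
  rw [← mulVec_mulVec, dotProduct_mulVec, ← mulVec_transpose, aux_transpose hA]

lemma aux_skew {d : ℕ} {S : Matrix (Fin d) (Fin d) ℝ} (hS : Sᵀ = -S)
    (x y : Fin d → ℝ) : y ⬝ᵥ S *ᵥ x = -(x ⬝ᵥ S *ᵥ y) := by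
  rw [dotProduct_mulVec, ← mulVec_transpose, hS, neg_mulVec, neg_dotProduct, dotProduct_comm]

lemma aux_cross {d : ℕ} {A B : Matrix (Fin d) (Fin d) ℝ} (hA : A.IsHermitian)
    (hAB : (A * B)ᵀ = -(A * B)) {μ ν : ℝ} {x y : Fin d → ℝ}
    (hx : (A + B) *ᵥ x = μ • x) (hy : (A + B) *ᵥ y = ν • y) :
    2 * ((A *ᵥ x) ⬝ᵥ (A *ᵥ y)) = (μ + ν) * (x ⬝ᵥ A *ᵥ y) := by
  have key : ∀ (z : Fin d → ℝ) (ρ : ℝ), (A + B) *ᵥ z = ρ • z →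
      (A * A) *ᵥ z + (A * B) *ᵥ z = ρ • (A *ᵥ z) := by
    intro z ρ hz
    rw [← add_mulVec, ← mul_add, ← mulVec_mulVec, hz, mulVec_smul]
  have e1 := congrArg (dotProduct y) (key x μ hx)
  have e2 := congrArg (dotProduct x) (key y ν hy)
  simp only [dotProduct_add, dotProduct_smul, smul_eq_mul] at e1 e2
  rw [aux_sq hA x y, dotProduct_comm (A *ᵥ y) (A *ᵥ x), aux_skew hAB x y,
    aux_symm hA x y] at e1
  rw [aux_sq hA y x] at e2
  linarith

lemma aux_self {d : ℕ} {A B : Matrix (Fin d) (Fin d) ℝ} (hA : A.IsHermitian)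
    (hAinv : IsUnit A.det) (hAB : (A * B)ᵀ = -(A * B)) {μ : ℝ} {x : Fin d → ℝ}
    (hx0 : x ≠ 0) (hx : (A + B) *ᵥ x = μ • x) :
    (A *ᵥ x) ⬝ᵥ (A *ᵥ x) = μ * (x ⬝ᵥ A *ᵥ x) ∧ 0 < (A *ᵥ x) ⬝ᵥ (A *ᵥ x) := by
  have h1 := aux_cross hA hAB hx hx
  have hAx : A *ᵥ x ≠ 0 := by
    intro h
    have := A.invertibleOfIsUnitDet hAinv
    apply hx0
    have h2 : ⅟A *ᵥ (A *ᵥ x) = ⅟A *ᵥ 0 := by rw [h]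
    rwa [mulVec_mulVec, invOf_mul_self, one_mulVec, mulVec_zero] at h2
  have h2 : 0 ≤ (A *ᵥ x) ⬝ᵥ (A *ᵥ x) := Finset.sum_nonneg fun i _ => mul_self_nonneg _
  have h3 : (A *ᵥ x) ⬝ᵥ (A *ᵥ x) ≠ 0 := fun h => hAx (dotProduct_self_eq_zero.mp h)
  exact ⟨by linarith, lt_of_le_of_ne h2 (Ne.symm h3)⟩

lemma aux_qsum {d : ℕ} {A : Matrix (Fin d) (Fin d) ℝ} (hA : A.IsHermitian) (v : Fin d → ℝ) :
    v ⬝ᵥ A *ᵥ v = ∑ i, hA.eigenvalues i *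
      ((star (hA.eigenvectorUnitary : Matrix (Fin d) (Fin d) ℝ) *ᵥ v) i) ^ 2 := by
  set U : Matrix (Fin d) (Fin d) ℝ := (hA.eigenvectorUnitary : Matrix (Fin d) (Fin d) ℝ) with hU
  have hstar : star U = Uᵀ := by
    rw [Matrix.star_eq_conjTranspose, conjTranspose_eq_transpose_of_trivial]
  conv_lhs => rw [hA.spectral_theorem, Unitary.conjStarAlgAut_apply]
  rw [← mulVec_mulVec, ← mulVec_mulVec, dotProduct_mulVec, ← mulVec_transpose, ← hstar, ← hU]
  rw [RCLike.ofReal_real_eq_id]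
  simp only [Function.comp_def, id]
  simp [dotProduct, mulVec_diagonal, Finset.mul_sum]
  exact Finset.sum_congr rfl fun i _ => by ring

lemma aux_pos_of_coord_zero {d : ℕ} {A : Matrix (Fin d) (Fin d) ℝ} (hA : A.IsHermitian)
    {i₀ : Fin d} (hpos : ∀ i, i ≠ i₀ → 0 < hA.eigenvalues i) {v : Fin d → ℝ} (hv : v ≠ 0)
    (h0 : (star (hA.eigenvectorUnitary : Matrix (Fin d) (Fin d) ℝ) *ᵥ v) i₀ = 0) :
    0 < v ⬝ᵥ A *ᵥ v := by
  set U : Matrix (Fin d) (Fin d) ℝ := (hA.eigenvectorUnitary : Matrix (Fin d) (Fin d) ℝ) with hU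
  set c := star U *ᵥ v with hc
  have hcne : c ≠ 0 := by
    intro h
    apply hv
    have h2 : U *ᵥ (star U *ᵥ v) = U *ᵥ 0 := by rw [← hc, h]
    rwa [mulVec_mulVec, (Matrix.mem_unitaryGroup_iff).mp hA.eigenvectorUnitary.2, one_mulVec,
      mulVec_zero] at h2
  obtain ⟨j, hj0⟩ := Function.ne_iff.mp hcne
  have hj : c j ≠ 0 := by simpa using hj0
  have hji : j ≠ i₀ := fun h => hj (h ▸ h0)
  rw [aux_qsum hA v]
  apply Finset.sum_pos'
  · intro i _
    rcases eq_or_ne i i₀ with h | h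
    · rw [h, ← hU, ← hc, h0]; simp
    · exact mul_nonneg (le_of_lt (hpos i h)) (sq_nonneg _)
  · exact ⟨j, Finset.mem_univ j, mul_pos (hpos j hji) (pow_two_pos_of_ne_zero hj)⟩

lemma aux_eval_charpoly {d : ℕ} (M : Matrix (Fin d) (Fin d) ℝ) (t : ℝ) :
    M.charpoly.eval t = (t • (1 : Matrix (Fin d) (Fin d) ℝ) - M).det := by
  rw [Matrix.charpoly, eval_det, matPolyEquiv_charmatrix]
  congr 1
  simp [Matrix.scalar, smul_eq_diagonal_mul]

lemma aux_indep {d : ℕ} {M : Matrix (Fin d) (Fin d) ℝ} {μ ν : ℝ} {x y : Fin d → ℝ}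
    (hx0 : x ≠ 0) (hy0 : y ≠ 0) (hμν : μ ≠ ν)
    (hx : M *ᵥ x = μ • x) (hy : M *ᵥ y = ν • y)
    {a b : ℝ} (hab : a • x + b • y = 0) : a = 0 ∧ b = 0 := by
  have h1 : (a * μ) • x + (b * ν) • y = 0 := by
    have := congrArg (fun v => M *ᵥ v) hab
    simpa [mulVec_add, mulVec_smul, hx, hy, smul_smul] using this
  have h2 : (ν * a) • x + (ν * b) • y = 0 := by
    have := congrArg (fun v => ν • v) hab
    simpa [smul_add, smul_smul] using this
  have h3 : (a * (μ - ν)) • x = 0 := by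
    have h4 := sub_eq_zero_of_eq (h1.trans h2.symm)
    rw [← h4]
    module
  have ha : a = 0 := by
    rcases smul_eq_zero.mp h3 with h | h
    · rcases mul_eq_zero.mp h with h' | h'
      · exact h'
      · exact absurd (sub_eq_zero.mp h') hμν
    · exact absurd h hx0
  refine ⟨ha, ?_⟩
  rw [ha, zero_smul, zero_add] at hab
  rcases smul_eq_zero.mp hab with h | h
  · exact h
  · exact absurd h hy0

end AuxStmt2

set_option maxHeartbeats 2000000 in
theorem stmt_2 (d : ℕ) (A B : Matrix (Fin d) (Fin d) ℝ)
    (hA : A.IsHermitian) (hAinv : IsUnit A.det)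
    (hAneg : (Finset.univ.filter (fun i => hA.eigenvalues i < 0)).card = 1)
    (hAB : (A * B)ᵀ = -(A * B)) :
    IsUnit (A + B).det ∧
    (∃! μ : ℝ, μ < 0 ∧ Module.End.HasEigenvalue (Matrix.toLin' (A + B)) μ) ∧
    (∀ μ : ℝ, μ < 0 → Module.End.HasEigenvalue (Matrix.toLin' (A + B)) μ →
      Module.finrank ℝ (Module.End.eigenspace (Matrix.toLin' (A + B)) μ) = 1) := by
  classical
  obtain ⟨i₀, hi₀⟩ := Finset.card_eq_one.mp hAneg
  have hmem : ∀ i : Fin d, hA.eigenvalues i < 0 ↔ i = i₀ := by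
    intro i
    constructor
    · intro h
      have h2 : i ∈ Finset.univ.filter (fun i => hA.eigenvalues i < 0) :=
        Finset.mem_filter.mpr ⟨Finset.mem_univ i, h⟩
      rw [hi₀] at h2
      exact Finset.mem_singleton.mp h2
    · intro h
      rw [h]
      have h2 : i₀ ∈ Finset.univ.filter (fun i => hA.eigenvalues i < 0) := by
        rw [hi₀]; exact Finset.mem_singleton_self i₀
      exact (Finset.mem_filter.mp h2).2
  have hlneg : hA.eigenvalues i₀ < 0 := (hmem i₀).mpr rfl
  have hdetprod : A.det = ∏ i, hA.eigenvalues i := by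
    simpa using hA.det_eq_prod_eigenvalues
  have hdetne : A.det ≠ 0 := hAinv.ne_zero
  have hlne : ∀ i, hA.eigenvalues i ≠ 0 := fun i h =>
    hdetne (hdetprod.trans (Finset.prod_eq_zero (Finset.mem_univ i) h))
  have hpos : ∀ i, i ≠ i₀ → 0 < hA.eigenvalues i := by
    intro i hi
    rcases (hlne i).lt_or_gt with h | h
    · exact absurd ((hmem i).mp h) hi
    · exact h
  -- translation between HasEigenvalue and mulVec equations
  have eigev : ∀ μ : ℝ, Module.End.HasEigenvalue (Matrix.toLin' (A + B)) μ →
      ∃ x, x ≠ 0 ∧ (A + B) *ᵥ x = μ • x := by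
    intro μ h
    obtain ⟨v, hv1, hv2⟩ := h.exists_hasEigenvector
    refine ⟨v, hv2, ?_⟩
    rw [← Matrix.toLin'_apply]
    exact Module.End.mem_eigenspace_iff.mp hv1
  have eigval : ∀ (μ : ℝ) (x : Fin d → ℝ), x ≠ 0 → (A + B) *ᵥ x = μ • x →
      Module.End.HasEigenvalue (Matrix.toLin' (A + B)) μ := by
    intro μ x hx0 hx
    exact Module.End.hasEigenvalue_of_hasEigenvector
      ⟨Module.End.mem_eigenspace_iff.mpr (by rw [Matrix.toLin'_apply]; exact hx), hx0⟩
  have qneg : ∀ (μ : ℝ) (x : Fin d → ℝ), x ≠ 0 → (A + B) *ᵥ x = μ • x → μ < 0 →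
      x ⬝ᵥ A *ᵥ x < 0 := by
    intro μ x hx0 hx hμ
    obtain ⟨h1, h2⟩ := aux_self hA hAinv hAB hx0 hx
    nlinarith
  have coordne : ∀ (μ : ℝ) (x : Fin d → ℝ), x ≠ 0 → (A + B) *ᵥ x = μ • x → μ < 0 →
      (star (hA.eigenvectorUnitary : Matrix (Fin d) (Fin d) ℝ) *ᵥ x) i₀ ≠ 0 := by
    intro μ x hx0 hx hμ h0
    exact absurd (qneg μ x hx0 hx hμ)
      (not_lt.mpr (le_of_lt (aux_pos_of_coord_zero hA hpos hx0 h0)))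
  -- the pencil A + t B is everywhere invertible
  have hker : ∀ t : ℝ, ∀ x : Fin d → ℝ, (A + t • B) *ᵥ x = 0 → x = 0 := by
    intro t x h
    have h2 : (A * A) *ᵥ x + t • ((A * B) *ᵥ x) = 0 := by
      have h3 := congrArg (fun v => A *ᵥ v) h
      simp only [mulVec_zero] at h3
      rw [← h3, mulVec_mulVec, mul_add, mul_smul_comm, add_mulVec, smul_mulVec]
    have h3 := congrArg (dotProduct x) h2
    simp only [dotProduct_add, dotProduct_smul, dotProduct_zero, smul_eq_mul] at h3
    rw [aux_sq hA x x] at h3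
    have hskew : x ⬝ᵥ (A * B) *ᵥ x = 0 := by have := aux_skew hAB x x; linarith
    rw [hskew, mul_zero, add_zero] at h3
    have h4 : A *ᵥ x = 0 := dotProduct_self_eq_zero.mp h3
    have := A.invertibleOfIsUnitDet hAinv
    calc x = ⅟A *ᵥ (A *ᵥ x) := by rw [mulVec_mulVec, invOf_mul_self, one_mulVec]
    _ = 0 := by rw [h4, mulVec_zero]
  have hdet_t : ∀ t : ℝ, (A + t • B).det ≠ 0 := by
    intro t h
    obtain ⟨v, hv0, hv⟩ := (Matrix.exists_mulVec_eq_zero_iff).mpr h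
    exact hv0 (hker t v hv)
  have hdetA : A.det < 0 := by
    have hsplit : ∏ i, hA.eigenvalues i =
        hA.eigenvalues i₀ * ∏ i ∈ Finset.univ.erase i₀, hA.eigenvalues i :=
      (Finset.mul_prod_erase Finset.univ _ (Finset.mem_univ i₀)).symm
    have hp2 : 0 < ∏ i ∈ Finset.univ.erase i₀, hA.eigenvalues i :=
      Finset.prod_pos fun i hi => hpos i (Finset.ne_of_mem_erase hi)
    rw [hdetprod, hsplit]
    exact mul_neg_of_neg_of_pos hlneg hp2
  have hdetAB : (A + B).det < 0 := by
    by_contra h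
    push_neg at h
    have h1 : (A + (1 : ℝ) • B).det ≠ 0 := hdet_t 1
    rw [one_smul] at h1
    have hgt : 0 < (A + B).det := lt_of_le_of_ne h (Ne.symm h1)
    have hcont : Continuous fun t : ℝ => (A + t • B).det :=
      (continuous_const.add (continuous_id.smul continuous_const)).matrix_det
    have h0mem : (0 : ℝ) ∈ Set.Icc ((A + (0 : ℝ) • B).det) ((A + (1 : ℝ) • B).det) := by
      constructor
      · rw [zero_smul, add_zero]; exact le_of_lt hdetA
      · rw [one_smul]; exact le_of_lt hgt
    obtain ⟨t, _, ht⟩ := intermediate_value_Icc (by norm_num : (0:ℝ) ≤ 1) hcont.continuousOn h0mem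
    exact hdet_t t ht
  have part1 : IsUnit (A + B).det := isUnit_iff_ne_zero.mpr hdetAB.ne
  have hd : 0 < d := i₀.pos
  -- existence of a negative eigenvalue
  have hexist : ∃ μ : ℝ, μ < 0 ∧ Module.End.HasEigenvalue (Matrix.toLin' (A + B)) μ := by
    set p := (A + B).charpoly with hp
    set r := Polynomial.C ((-1 : ℝ) ^ d) * (p.comp (-Polynomial.X)) with hr
    have hpm : p.Monic := (A + B).charpoly_monic
    have hpdeg : p.natDegree = d := by
      rw [hp, (A + B).charpoly_natDegree_eq_dim, Fintype.card_fin]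
    have hXdeg : (-Polynomial.X : Polynomial ℝ).natDegree = 1 := by simp
    have hone : ((-1 : ℝ) ^ d) * ((-1 : ℝ) ^ d) = 1 := by
      rw [← pow_add]
      exact Even.neg_one_pow ⟨d, rfl⟩
    have hlc : r.leadingCoeff = 1 := by
      rw [hr, Polynomial.leadingCoeff_mul, Polynomial.leadingCoeff_C,
        Polynomial.leadingCoeff_comp (by rw [hXdeg]; exact one_ne_zero)]
      simp only [Polynomial.leadingCoeff_neg, Polynomial.leadingCoeff_X, hpm.leadingCoeff, hpdeg]
      rw [one_mul]
      exact hone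
    have hrdeg : 0 < r.natDegree := by
      rw [hr, Polynomial.natDegree_C_mul (pow_ne_zero _ (by norm_num : (-1:ℝ) ≠ 0)),
        Polynomial.natDegree_comp, hpdeg, hXdeg, mul_one]
      exact hd
    have htend : Filter.Tendsto (fun s => r.eval s) Filter.atTop Filter.atTop :=
      r.tendsto_atTop_of_leadingCoeff_nonneg
        (Polynomial.natDegree_pos_iff_degree_pos.mp hrdeg) (by rw [hlc]; norm_num)
    obtain ⟨s, hs⟩ := ((htend.eventually_gt_atTop 0).and (Filter.eventually_ge_atTop 0)).exists
    obtain ⟨hspos, hs0⟩ := hs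
    have hrs : r.eval s = (-1 : ℝ) ^ d * p.eval (-s) := by
      simp [hr, Polynomial.eval_comp]
    set F : ℝ → ℝ := fun t => (-1 : ℝ) ^ d * p.eval t with hF
    have hFcont : ContinuousOn F (Set.Icc (-s) 0) :=
      (continuous_const.mul (Polynomial.continuous p)).continuousOn
    have hF0 : F 0 = (A + B).det := by
      have h5 := (A + B).det_eq_sign_charpoly_coeff
      rw [Fintype.card_fin, Polynomial.coeff_zero_eq_eval_zero] at h5
      rw [hF]
      exact h5.symm
    have hFs : 0 < F (-s) := by
      rw [hF]
      simpa [hrs] using hspos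
    have h0mem : (0 : ℝ) ∈ Set.Icc (F 0) (F (-s)) :=
      ⟨by rw [hF0]; exact le_of_lt hdetAB, le_of_lt hFs⟩
    obtain ⟨μ₀, hμ₀mem, hμ₀F⟩ := intermediate_value_Icc' (neg_nonpos.mpr hs0) hFcont h0mem
    have hμ₀ne : μ₀ ≠ 0 := by
      rintro rfl
      rw [hμ₀F] at hF0
      exact absurd hF0.symm (ne_of_lt hdetAB)
    have hμ₀neg : μ₀ < 0 := lt_of_le_of_ne hμ₀mem.2 hμ₀ne
    have hpμ₀ : p.eval μ₀ = 0 := by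
      have h6 : (-1 : ℝ) ^ d ≠ 0 := pow_ne_zero _ (by norm_num)
      rcases mul_eq_zero.mp hμ₀F with h | h
      · exact absurd h h6
      · exact h
    have hdet0 : (μ₀ • (1 : Matrix (Fin d) (Fin d) ℝ) - (A + B)).det = 0 := by
      rw [← aux_eval_charpoly]; exact hpμ₀
    obtain ⟨v, hv0, hv⟩ := Matrix.exists_mulVec_eq_zero_iff.mpr hdet0
    have hveig : (A + B) *ᵥ v = μ₀ • v := by
      rw [sub_mulVec, smul_mulVec, one_mulVec, sub_eq_zero] at hv
      exact hv.symm
    exact ⟨μ₀, hμ₀neg, eigval μ₀ v hv0 hveig⟩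
  -- uniqueness of the negative eigenvalue
  have uniq : ∀ μ ν : ℝ, μ < 0 → ν < 0 →
      Module.End.HasEigenvalue (Matrix.toLin' (A + B)) μ →
      Module.End.HasEigenvalue (Matrix.toLin' (A + B)) ν → μ = ν := by
    intro μ ν hμ hν hμe hνe
    by_contra hμν
    obtain ⟨x, hx0, hx⟩ := eigev μ hμe
    obtain ⟨y, hy0, hy⟩ := eigev ν hνe
    set cx := (star (hA.eigenvectorUnitary : Matrix (Fin d) (Fin d) ℝ) *ᵥ x) i₀ with hcxd
    set cy := (star (hA.eigenvectorUnitary : Matrix (Fin d) (Fin d) ℝ) *ᵥ y) i₀ with hcyd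
    have hcx : cx ≠ 0 := coordne μ x hx0 hx hμ
    have hcy : cy ≠ 0 := coordne ν y hy0 hy hν
    set z := cy • x - cx • y with hz
    have hz0 : z ≠ 0 := by
      intro h
      have h' : cy • x + (-cx) • y = 0 := by rw [neg_smul, ← sub_eq_add_neg, ← hz]; exact h
      exact hcy (aux_indep hx0 hy0 hμν hx hy h').1
    have hzc : (star (hA.eigenvectorUnitary : Matrix (Fin d) (Fin d) ℝ) *ᵥ z) i₀ = 0 := by
      rw [hz, mulVec_sub, mulVec_smul, mulVec_smul]
      simp only [Pi.sub_apply, Pi.smul_apply, smul_eq_mul, ← hcxd, ← hcyd]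
      ring
    have hzpos : 0 < z ⬝ᵥ A *ᵥ z := aux_pos_of_coord_zero hA hpos hz0 hzc
    set qx := x ⬝ᵥ A *ᵥ x with hqxd
    set qy := y ⬝ᵥ A *ᵥ y with hqyd
    set P := x ⬝ᵥ A *ᵥ y with hPd
    have hqx : qx < 0 := qneg μ x hx0 hx hμ
    have hqy : qy < 0 := qneg ν y hy0 hy hν
    have hexp : z ⬝ᵥ A *ᵥ z = cy ^ 2 * qx - 2 * cy * cx * P + cx ^ 2 * qy := by
      rw [hz]
      simp only [mulVec_sub, mulVec_smul, sub_dotProduct, dotProduct_sub, smul_dotProduct,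
        dotProduct_smul, smul_eq_mul]
      rw [aux_symm hA x y, ← hqxd, ← hqyd, ← hPd]
      ring
    have hG := aux_cross hA hAB hx hy
    have hNx := (aux_self hA hAinv hAB hx0 hx).1
    have hNy := (aux_self hA hAinv hAB hy0 hy).1
    rw [← hPd] at hG
    rw [← hqxd] at hNx
    rw [← hqyd] at hNy
    have cauchy : ((A *ᵥ x) ⬝ᵥ (A *ᵥ y)) ^ 2 ≤ ((A *ᵥ x) ⬝ᵥ (A *ᵥ x)) * ((A *ᵥ y) ⬝ᵥ (A *ᵥ y)) := by
      have h7 := Finset.sum_mul_sq_le_sq_mul_sq Finset.univ (A *ᵥ x) (A *ᵥ y)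
      simpa [dotProduct, sq] using h7
    rw [hNx, hNy] at cauchy
    set G := (A *ᵥ x) ⬝ᵥ (A *ᵥ y) with hGd
    rw [hexp] at hzpos
    have hP2gt : qx * qy < P ^ 2 := by
      have hcx2 : 0 < cx ^ 2 := pow_two_pos_of_ne_zero hcx
      have hcy2 : 0 < cy ^ 2 := pow_two_pos_of_ne_zero hcy
      have hS : cy ^ 2 * qx + cx ^ 2 * qy < 0 := by nlinarith
      have h1 : 2 * (cy * cx) * P < cy ^ 2 * qx + cx ^ 2 * qy := by nlinarith
      have h2 : (cy ^ 2 * qx + cx ^ 2 * qy) ^ 2 < (2 * (cy * cx) * P) ^ 2 := by nlinarith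
      have h3 : 4 * (cy * cx) ^ 2 * (qx * qy) ≤ (cy ^ 2 * qx + cx ^ 2 * qy) ^ 2 := by
        nlinarith [sq_nonneg (cy ^ 2 * qx - cx ^ 2 * qy)]
      have hcc : 0 < (cy * cx) ^ 2 := pow_two_pos_of_ne_zero (mul_ne_zero hcy hcx)
      nlinarith
    have hP2lt : P ^ 2 < qx * qy := by
      have h4 : (2 * G) ^ 2 = ((μ + ν) * P) ^ 2 := by rw [hG]
      have h5 : (μ + ν) ^ 2 * P ^ 2 ≤ 4 * ((μ * qx) * (ν * qy)) := by nlinarith [cauchy, h4]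
      have hsub : 0 < (μ - ν) ^ 2 := pow_two_pos_of_ne_zero (sub_ne_zero.mpr hμν)
      have hμνlt : 4 * (μ * ν) < (μ + ν) ^ 2 := by nlinarith
      have hqq : 0 < qx * qy := mul_pos_of_neg_of_neg hqx hqy
      have hsum : 0 < (μ + ν) ^ 2 := by nlinarith
      nlinarith
    linarith
  -- geometric multiplicity
  have mult : ∀ μ : ℝ, μ < 0 → Module.End.HasEigenvalue (Matrix.toLin' (A + B)) μ →
      Module.finrank ℝ (Module.End.eigenspace (Matrix.toLin' (A + B)) μ) = 1 := by
    intro μ hμ hμe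
    obtain ⟨x, hx0, hx⟩ := eigev μ hμe
    have hxmem : x ∈ Module.End.eigenspace (Matrix.toLin' (A + B)) μ :=
      Module.End.mem_eigenspace_iff.mpr (by rw [Matrix.toLin'_apply]; exact hx)
    rw [finrank_eq_one_iff']
    refine ⟨⟨x, hxmem⟩, by simpa using hx0, ?_⟩
    rintro ⟨y, hymem⟩
    have hy : (A + B) *ᵥ y = μ • y := by
      have h8 := Module.End.mem_eigenspace_iff.mp hymem
      rwa [Matrix.toLin'_apply] at h8
    by_cases hcase : ∃ c : ℝ, c • x = y
    · obtain ⟨c, hc⟩ := hcase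
      exact ⟨c, Subtype.ext (by simpa using hc)⟩
    · exfalso
      push_neg at hcase
      have hind : ∀ a b : ℝ, a • x + b • y = 0 → a = 0 ∧ b = 0 := by
        intro a b hab
        rcases eq_or_ne b 0 with hb | hb
        · subst hb
          rw [zero_smul, add_zero] at hab
          rcases smul_eq_zero.mp hab with h | h
          · exact ⟨h, rfl⟩
          · exact absurd h hx0
        · exfalso
          apply hcase (-(a / b))
          have h1 : b • y = -(a • x) := by
            rw [add_comm] at hab
            exact add_eq_zero_iff_eq_neg.mp hab
          calc (-(a / b)) • x = b⁻¹ • (-(a • x)) := by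
                rw [div_eq_inv_mul, smul_neg, smul_smul, ← neg_smul]
          _ = b⁻¹ • (b • y) := by rw [h1]
          _ = y := by rw [smul_smul, inv_mul_cancel₀ hb, one_smul]
      set cx := (star (hA.eigenvectorUnitary : Matrix (Fin d) (Fin d) ℝ) *ᵥ x) i₀ with hcxd
      set cy := (star (hA.eigenvectorUnitary : Matrix (Fin d) (Fin d) ℝ) *ᵥ y) i₀ with hcyd
      have hcx : cx ≠ 0 := coordne μ x hx0 hx hμ
      set z := cy • x - cx • y with hz
      have hz0 : z ≠ 0 := by
        intro h
        have h' : cy • x + (-cx) • y = 0 := by rw [neg_smul, ← sub_eq_add_neg, ← hz]; exact h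
        exact hcx (neg_eq_zero.mp (hind cy (-cx) h').2)
      have hzmem : z ∈ Module.End.eigenspace (Matrix.toLin' (A + B)) μ :=
        Submodule.sub_mem _ (Submodule.smul_mem _ _ hxmem) (Submodule.smul_mem _ _ hymem)
      have hzeig : (A + B) *ᵥ z = μ • z := by
        have h9 := Module.End.mem_eigenspace_iff.mp hzmem
        rwa [Matrix.toLin'_apply] at h9
      have h1 : z ⬝ᵥ A *ᵥ z < 0 := qneg μ z hz0 hzeig hμ
      have hzc : (star (hA.eigenvectorUnitary : Matrix (Fin d) (Fin d) ℝ) *ᵥ z) i₀ = 0 := by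
        rw [hz, mulVec_sub, mulVec_smul, mulVec_smul]
        simp only [Pi.sub_apply, Pi.smul_apply, smul_eq_mul, ← hcxd, ← hcyd]
        ring
      exact absurd h1 (not_lt.mpr (le_of_lt (aux_pos_of_coord_zero hA hpos hz0 hzc)))
  obtain ⟨μ₀, hμ₀, heig₀⟩ := hexist
  exact ⟨part1, ⟨μ₀, ⟨hμ₀, heig₀⟩, fun ν hν => uniq ν μ₀ hν.1 hμ₀ hν.2 heig₀⟩, mult⟩
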